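/- In the surface A₄ singularity S = V(xy − z⁵) ⊂ ℂ³, let E be the curve {x − z = 0, y − z⁴ = 0} and F the curve {x − z² = 0, y − z³ = 0}. Then the scheme-theoretic intersection length of the divisor 5E with F at the origin equals 3. -/

import Mathlib

set_option synthInstance.maxHeartbeats 1000000
set_option maxHeartbeats 1000000

/- STATEMENT 6: In the A₄ surface singularity S = V(xy − z⁵) ⊂ ℂ³, let
E = {x − z = y − z⁴ = 0} and F = {x − z² = y − z³ = 0}.  The scheme-theoretic
intersection length of the divisor 5E with F at the origin equals 3: the length
of O_S/(I_F + I_{5E}) localized at the origin is 3, where I_{5E} = I_E^{(5)} is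
the ideal of functions vanishing to order 5 along E (defined as the symbolic
power, i.e. the contraction of the 5-th power of the extension of I_E in the
localization at the prime I_E).  Since the residue field at the origin is ℂ, the
length equals the dimension as a ℂ-vector space.
Coordinates: x = X 0, y = X 1, z = X 2. -/

open MvPolynomial

noncomputable def relA : Ideal (MvPolynomial (Fin 3) ℂ) :=
  Ideal.span {X 0 * X 1 - X 2 ^ 5}

/-- The coordinate ring of the A₄ singularity S = V(xy − z⁵). -/
abbrev A₄ring := MvPolynomial (Fin 3) ℂ ⧸ relA

noncomputable def qA : MvPolynomial (Fin 3) ℂ →+* A₄ring := Ideal.Quotient.mk relA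

/-- The prime ideal of the curve E = {x − z = y − z⁴ = 0} ⊂ S. -/
noncomputable def PE : Ideal A₄ring := Ideal.span {qA (X 0 - X 2), qA (X 1 - X 2 ^ 4)}

/-- The ideal of the curve F = {x − z² = y − z³ = 0} ⊂ S. -/
noncomputable def IF : Ideal A₄ring := Ideal.span {qA (X 0 - X 2 ^ 2), qA (X 1 - X 2 ^ 3)}

/-- The maximal ideal of the origin. -/
noncomputable def Morig : Ideal A₄ring := Ideal.span {qA (X 0), qA (X 1), qA (X 2)}

/-- The symbolic power I_E^{(5)} = I_{5E}: functions vanishing to order ≥ 5 along E. -/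
noncomputable def symb5 [PE.IsPrime] : Ideal A₄ring :=
  Ideal.comap (algebraMap A₄ring (Localization.AtPrime PE))
    ((Ideal.map (algebraMap A₄ring (Localization.AtPrime PE)) PE) ^ 5)

/-- The local ring of S at the origin. -/
noncomputable abbrev Sorig [Morig.IsPrime] := Localization.AtPrime Morig

noncomputable instance [Morig.IsPrime] : Algebra ℂ Sorig :=
  ((algebraMap A₄ring Sorig).comp (algebraMap ℂ A₄ring)).toAlgebra


noncomputable instance instCommRingA₄ring : CommRing A₄ring := inferInstance

abbrev Bmod := AdjoinRoot ((Polynomial.X : Polynomial (Polynomial ℂ)) ^ 5)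
noncomputable def rB : Bmod := AdjoinRoot.root _
noncomputable def zB : Bmod := AdjoinRoot.of _ Polynomial.X
noncomputable def pB : Bmod := zB^4 - zB^3*rB + zB^2*rB^2 - zB*rB^3 + rB^4
lemma rB5 : rB ^ 5 = 0 := by
  rw [rB, ← AdjoinRoot.mk_X, ← map_pow, AdjoinRoot.mk_self]
noncomputable def βm : MvPolynomial (Fin 3) ℂ →ₐ[ℂ] Bmod := aeval ![zB + rB, pB, zB]
lemma βm_rel : βm (X 0 * X 1 - X 2 ^ 5) = 0 := by
  have h : (zB + rB) * pB - zB ^ 5 = rB ^ 5 := by rw [pB]; ring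
  simp only [βm, map_sub, map_mul, map_pow, aeval_X]
  show (![zB + rB, pB, zB] 0) * (![zB + rB, pB, zB] 1) - (![zB + rB, pB, zB] 2)^5 = 0
  simp only [Matrix.cons_val_zero, Matrix.cons_val_one, Matrix.head_cons]
  rw [show (![zB + rB, pB, zB] : Fin 3 → Bmod) 2 = zB from rfl]
  rw [h, rB5]

/-- lift to the quotient -/
noncomputable def βA : A₄ring →+* Bmod :=
  Ideal.Quotient.lift relA βm.toRingHom (by
    intro a ha
    rw [relA, Ideal.mem_span_singleton] at ha
    obtain ⟨c, rfl⟩ := ha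
    rw [mul_comm]
    simp only [AlgHom.toRingHom_eq_coe, RingHom.coe_coe, map_mul, βm_rel, mul_zero])

lemma βA_qA (q : MvPolynomial (Fin 3) ℂ) : βA (qA q) = βm q := rfl

/-- The residue ring ℂ[z]/(z³). -/
abbrev R0 := AdjoinRoot ((Polynomial.X : Polynomial ℂ) ^ 3)
noncomputable def r0 : R0 := AdjoinRoot.root _
lemma r0_3 : r0 ^ 3 = 0 := by
  rw [r0, ← AdjoinRoot.mk_X, ← map_pow, AdjoinRoot.mk_self]

noncomputable def χm : MvPolynomial (Fin 3) ℂ →ₐ[ℂ] R0 := aeval ![r0^2, 0, r0]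
lemma χm_rel : χm (X 0 * X 1 - X 2 ^ 5) = 0 := by
  simp only [χm, map_sub, map_mul, map_pow, aeval_X]
  show (![r0^2, 0, r0] 0) * (![r0^2, 0, r0] 1) - (![r0^2, 0, r0] 2)^5 = 0
  rw [show (![r0^2, 0, r0] : Fin 3 → R0) 2 = r0 from rfl,
    show (![r0^2, 0, r0] : Fin 3 → R0) 1 = 0 from rfl]
  have : r0^5 = r0^3 * r0^2 := by ring
  simp [this, r0_3]

noncomputable def χA : A₄ring →+* R0 :=
  Ideal.Quotient.lift relA χm.toRingHom (by
    intro a ha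
    rw [relA, Ideal.mem_span_singleton] at ha
    obtain ⟨c, rfl⟩ := ha
    rw [mul_comm]
    simp only [AlgHom.toRingHom_eq_coe, RingHom.coe_coe, map_mul, χm_rel, mul_zero])

lemma χA_qA (q : MvPolynomial (Fin 3) ℂ) : χA (qA q) = χm q := rfl

/-- the map B → R0, z ↦ r0, root ↦ r0² − r0 -/
noncomputable def θ : Bmod →+* R0 :=
  AdjoinRoot.lift ((Polynomial.aeval r0).toRingHom : Polynomial ℂ →+* R0) (r0^2 - r0) (by
    have h : (r0^2 - r0)^5 = r0^3 * (r0^2*(r0-1)^5) := by ring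
    simp only [Polynomial.eval₂_pow, Polynomial.eval₂_X]
    rw [h, r0_3, zero_mul])

lemma θ_rB : θ rB = r0^2 - r0 := AdjoinRoot.lift_root _
lemma θ_zB : θ zB = r0 := by
  rw [zB, θ, AdjoinRoot.lift_of]; simp

lemma θ_βA : ∀ a, θ (βA a) = χA a := by
  have key : (θ.comp βA).comp qA = χA.comp qA := by
    apply MvPolynomial.ringHom_ext
    · intro c
      show θ (βm (C c)) = χm (C c)
      rw [show (C c : MvPolynomial (Fin 3) ℂ) = algebraMap ℂ _ c from rfl, AlgHom.commutes,
        AlgHom.commutes]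
      rw [show algebraMap ℂ Bmod c = AdjoinRoot.of _ (Polynomial.C c) from rfl]
      rw [θ, AdjoinRoot.lift_of]
      simp
    · intro i
      fin_cases i
      · show θ (βm (X 0)) = χm (X 0)
        rw [show βm (X 0) = zB + rB from by simp [βm], show χm (X 0) = r0^2 from by simp [χm]]
        rw [map_add, θ_rB, θ_zB]; ring
      · show θ (βm (X 1)) = χm (X 1)
        rw [show βm (X 1) = pB from by simp [βm], show χm (X 1) = 0 from by simp [χm]]
        rw [pB]
        simp only [map_add, map_sub, map_mul, map_pow, θ_rB, θ_zB]
        have : r0 ^ 4 - r0 ^ 3 * (r0 ^ 2 - r0) + r0 ^ 2 * (r0 ^ 2 - r0) ^ 2 - r0 * (r0 ^ 2 - r0) ^ 3 + (r0 ^ 2 - r0) ^ 4 = r0^3 * (r0 - (r0^2 - r0) + r0*(r0-1)^2 - r0*(r0-1)^3 + r0*(r0-1)^4) := by ring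
        rw [this, r0_3, zero_mul]
      · show θ (βm (X 2)) = χm (X 2)
        rw [show βm (X 2) = zB from by simp [βm], show χm (X 2) = r0 from by simp [χm]]
        exact θ_zB
  intro a
  obtain ⟨q, rfl⟩ := Ideal.Quotient.mk_surjective a
  exact DFunLike.congr_fun key q


lemma sub_aeval_mem (I : Ideal (MvPolynomial (Fin 3) ℂ)) (v : Fin 3 → MvPolynomial (Fin 3) ℂ)
    (h : ∀ i, X i - v i ∈ I) (q : MvPolynomial (Fin 3) ℂ) : q - aeval v q ∈ I := by
  induction q using MvPolynomial.induction_on with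
  | C a => simp
  | add p r hp hr =>
      have := I.add_mem hp hr
      convert this using 1
      simp only [map_add]; ring
  | mul_X p i hp =>
      have := I.add_mem (I.mul_mem_right (X i) hp) (I.mul_mem_left (aeval v p) (h i))
      convert this using 1
      simp only [map_mul, aeval_X]; ring

lemma keyB (u v : Bmod) (hu : u ∉ Ideal.span {rB}) (h : u * v = 0) : v = 0 := by
  obtain ⟨f, rfl⟩ := AdjoinRoot.mk_surjective u
  obtain ⟨g, rfl⟩ := AdjoinRoot.mk_surjective v
  rw [← map_mul, AdjoinRoot.mk_eq_zero] at h
  have hXf : ¬ (Polynomial.X ∣ f) := by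
    intro hd
    exact hu (Ideal.mem_span_singleton.2 (by rw [rB, ← AdjoinRoot.mk_X]; exact map_dvd _ hd))
  have : (Polynomial.X : Polynomial (Polynomial ℂ)) ^ 5 ∣ g :=
    (Polynomial.prime_X).pow_dvd_of_dvd_mul_left 5 hXf h
  rwa [AdjoinRoot.mk_eq_zero]

noncomputable def θ0 : Bmod →+* Polynomial ℂ :=
  AdjoinRoot.lift (RingHom.id (Polynomial ℂ)) 0 (by simp)

noncomputable def εm : MvPolynomial (Fin 3) ℂ →ₐ[ℂ] Polynomial ℂ :=
  aeval ![Polynomial.X, Polynomial.X ^ 4, Polynomial.X]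

lemma θ0_rB : θ0 rB = 0 := AdjoinRoot.lift_root _
lemma θ0_zB : θ0 zB = Polynomial.X := by rw [zB, θ0, AdjoinRoot.lift_of]; rfl

lemma θ0_βm (q : MvPolynomial (Fin 3) ℂ) : θ0 (βm q) = εm q := by
  have key : θ0.comp βm.toRingHom = εm.toRingHom := by
    apply MvPolynomial.ringHom_ext
    · intro c
      show θ0 (βm (C c)) = εm (C c)
      rw [show (C c : MvPolynomial (Fin 3) ℂ) = algebraMap ℂ _ c from rfl, AlgHom.commutes,
        AlgHom.commutes]
      rw [show algebraMap ℂ Bmod c = AdjoinRoot.of _ (Polynomial.C c) from rfl]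
      rw [θ0, AdjoinRoot.lift_of]
      rfl
    · intro i
      fin_cases i
      · show θ0 (βm (X 0)) = εm (X 0)
        rw [show βm (X 0) = zB + rB from by simp [βm], show εm (X 0) = Polynomial.X from by simp [εm]]
        rw [map_add, θ0_rB, θ0_zB, add_zero]
      · show θ0 (βm (X 1)) = εm (X 1)
        rw [show βm (X 1) = pB from by simp [βm], show εm (X 1) = Polynomial.X ^ 4 from by simp [εm]]
        rw [pB]
        simp only [map_add, map_sub, map_mul, map_pow, θ0_rB, θ0_zB]
        ring
      · show θ0 (βm (X 2)) = εm (X 2)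
        rw [show βm (X 2) = zB from by simp [βm], show εm (X 2) = Polynomial.X from by simp [εm]]
        exact θ0_zB
  exact DFunLike.congr_fun key q

lemma ker_eps (q : MvPolynomial (Fin 3) ℂ) (h : εm q = 0) :
    q ∈ Ideal.span {X 0 - X 2, X 1 - X 2 ^ 4} := by
  set I : Ideal (MvPolynomial (Fin 3) ℂ) := Ideal.span {X 0 - X 2, X 1 - X 2 ^ 4} with hI
  have hv : ∀ i, X i - (![X 2, X 2 ^ 4, X 2] : Fin 3 → MvPolynomial (Fin 3) ℂ) i ∈ I := by
    intro i
    fin_cases i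
    · exact Ideal.subset_span (by simp)
    · exact Ideal.subset_span (by simp)
    · show X 2 - X 2 ∈ I
      simp
  have hsub := sub_aeval_mem I _ hv q
  have hcomp : (aeval (![X 2, X 2 ^ 4, X 2] : Fin 3 → MvPolynomial (Fin 3) ℂ)) q
      = Polynomial.aeval (X 2 : MvPolynomial (Fin 3) ℂ) (εm q) := by
    have : ((Polynomial.aeval (X 2 : MvPolynomial (Fin 3) ℂ)).comp εm)
        = aeval (![X 2, X 2 ^ 4, X 2] : Fin 3 → MvPolynomial (Fin 3) ℂ) := by
      apply MvPolynomial.algHom_ext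
      intro i
      fin_cases i <;> simp [εm]
    rw [← this]; rfl
  rw [hcomp, h, map_zero, sub_zero] at hsub
  exact hsub

lemma mem_PE_of (q : MvPolynomial (Fin 3) ℂ) (h : βm q ∈ Ideal.span {rB}) : qA q ∈ PE := by
  obtain ⟨w, hw⟩ := Ideal.mem_span_singleton.1 h
  have hε : εm q = 0 := by
    rw [← θ0_βm, hw, map_mul, θ0_rB, zero_mul]
  have hq := ker_eps q hε
  have := Ideal.mem_map_of_mem qA hq
  rwa [Ideal.map_span, Set.image_insert_eq, Set.image_singleton] at this


lemma βA_PE_le : Ideal.map βA PE ≤ Ideal.span {rB} := by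
  rw [PE, Ideal.map_span, Set.image_insert_eq, Set.image_singleton]
  apply Ideal.span_le.2
  rintro u hu
  simp only [Set.mem_insert_iff, Set.mem_singleton_iff] at hu
  rcases hu with rfl | rfl
  · rw [βA_qA, show βm (X 0 - X 2) = rB from by
      simp only [map_sub, βm, aeval_X]
      show (![zB + rB, pB, zB] 0) - (![zB + rB, pB, zB] 2) = rB
      rw [show (![zB + rB, pB, zB] : Fin 3 → Bmod) 0 = zB + rB from rfl,
        show (![zB + rB, pB, zB] : Fin 3 → Bmod) 2 = zB from rfl]
      ring]
    exact Ideal.subset_span rfl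
  · rw [βA_qA, show βm (X 1 - X 2 ^ 4) = rB * (-zB^3 + zB^2*rB - zB*rB^2 + rB^3) from by
      simp only [map_sub, map_pow, βm, aeval_X]
      rw [show (![zB + rB, pB, zB] : Fin 3 → Bmod) 1 = pB from rfl,
        show (![zB + rB, pB, zB] : Fin 3 → Bmod) 2 = zB from rfl]
      rw [pB]; ring]
    exact Ideal.mul_mem_right _ _ (Ideal.subset_span rfl)

lemma βA_PE5 {t : A₄ring} (ht : t ∈ PE ^ 5) : βA t = 0 := by
  have h1 : Ideal.map βA (PE ^ 5) ≤ ⊥ := by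
    rw [Ideal.map_pow]
    calc (Ideal.map βA PE) ^ 5 ≤ (Ideal.span {rB}) ^ 5 := Ideal.pow_right_mono βA_PE_le 5
    _ = Ideal.span {rB ^ 5} := Ideal.span_singleton_pow rB 5
    _ = ⊥ := by rw [rB5, Ideal.span_singleton_eq_bot.2 rfl]
  have := h1 (Ideal.mem_map_of_mem βA ht)
  simpa using this

lemma χA_symb5 [PE.IsPrime] {a : A₄ring} (ha : a ∈ symb5) : χA a = 0 := by
  rw [symb5, Ideal.mem_comap, ← Ideal.map_pow,
    IsLocalization.mem_map_algebraMap_iff PE.primeCompl] at ha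
  obtain ⟨⟨b, s⟩, hb⟩ := ha
  rw [← map_mul, IsLocalization.eq_iff_exists PE.primeCompl] at hb
  obtain ⟨c, hc⟩ := hb
  have hmem : ((c : A₄ring) * s) * a ∈ PE ^ 5 := by
    rw [show ((c : A₄ring) * s) * a = (c : A₄ring) * (a * s) by ring, hc]
    exact Ideal.mul_mem_left _ _ b.2
  have hcs : ((c : A₄ring) * (s : A₄ring)) ∉ PE := (c * s : PE.primeCompl).2
  have hβ0 : βA ((c : A₄ring) * s) * βA a = 0 := by
    rw [← map_mul]; exact βA_PE5 hmem
  have hβs : βA ((c : A₄ring) * s) ∉ Ideal.span {rB} := by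
    intro hmem'
    obtain ⟨q, hq⟩ := Ideal.Quotient.mk_surjective ((c : A₄ring) * (s : A₄ring))
    have hq' : qA q = (c : A₄ring) * (s : A₄ring) := hq
    have : qA q ∈ PE := mem_PE_of q (by rw [← βA_qA, hq']; exact hmem')
    rw [hq'] at this
    exact hcs this
  have hβa : βA a = 0 := keyB _ _ hβs hβ0
  rw [← θ_βA, hβa, map_zero]


noncomputable def tm : MvPolynomial (Fin 3) ℂ := X 0 - X 2
noncomputable def gm : MvPolynomial (Fin 3) ℂ :=
  X 1 - X 2 ^ 4 + X 2 ^ 3 * tm - X 2 ^ 2 * tm ^ 2 + X 2 * tm ^ 3 - tm ^ 4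

lemma gm_identity : X 0 * gm + tm ^ 5 = X 0 * X 1 - X 2 ^ 5 := by
  rw [gm, tm]; ring

noncomputable def εA : A₄ring →+* Polynomial ℂ :=
  Ideal.Quotient.lift relA εm.toRingHom (by
    intro a ha
    rw [relA, Ideal.mem_span_singleton] at ha
    obtain ⟨c, rfl⟩ := ha
    have : εm (X 0 * X 1 - X 2 ^ 5) = 0 := by
      simp only [map_sub, map_mul, map_pow, εm, aeval_X]
      rw [show (![Polynomial.X, Polynomial.X^4, Polynomial.X] : Fin 3 → Polynomial ℂ) 0 = Polynomial.X from rfl,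
        show (![Polynomial.X, Polynomial.X^4, Polynomial.X] : Fin 3 → Polynomial ℂ) 1 = Polynomial.X^4 from rfl,
        show (![Polynomial.X, Polynomial.X^4, Polynomial.X] : Fin 3 → Polynomial ℂ) 2 = Polynomial.X from rfl]
      ring
    simp only [AlgHom.toRingHom_eq_coe, RingHom.coe_coe, map_mul, this, zero_mul])

lemma x_notin_PE : qA (X 0) ∉ PE := by
  intro h
  have hker : PE ≤ RingHom.ker εA := by
    rw [PE]
    apply Ideal.span_le.2
    rintro u hu
    simp only [Set.mem_insert_iff, Set.mem_singleton_iff] at hu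
    rcases hu with rfl | rfl
    · show εm (X 0 - X 2) = 0
      simp [εm]
    · show εm (X 1 - X 2 ^ 4) = 0
      simp [εm]
  have : εA (qA (X 0)) = 0 := hker h
  rw [show εA (qA (X 0)) = εm (X 0) from rfl] at this
  simp [εm] at this

lemma qA_rel : qA (X 0 * X 1 - X 2 ^ 5) = 0 :=
  Ideal.Quotient.eq_zero_iff_mem.2 (Ideal.subset_span rfl)

lemma g_symb5 [PE.IsPrime] : qA gm ∈ symb5 := by
  rw [symb5, Ideal.mem_comap]
  set L := Localization.AtPrime PE
  set φ := algebraMap A₄ring L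
  have hrel : qA (X 0) * qA gm = - (qA tm) ^ 5 := by
    rw [← map_mul, ← map_pow, ← map_neg, ← sub_eq_zero, ← map_sub]
    rw [show X 0 * gm - -(tm ^ 5) = X 0 * gm + tm ^ 5 by ring, gm_identity]
    exact qA_rel
  have htm : qA tm ∈ PE := Ideal.subset_span (by rw [tm]; exact Set.mem_insert _ _)
  have hmem : φ (qA (X 0)) * φ (qA gm) ∈ (Ideal.map φ PE) ^ 5 := by
    rw [← map_mul, hrel, map_neg, map_pow]
    exact neg_mem (Ideal.pow_mem_pow (Ideal.mem_map_of_mem φ htm) 5)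
  have hx : IsUnit (φ (qA (X 0))) :=
    IsLocalization.map_units L (⟨qA (X 0), x_notin_PE⟩ : PE.primeCompl)
  have : φ (qA gm) = (hx.unit⁻¹ : Lˣ) * (φ (qA (X 0)) * φ (qA gm)) := by
    rw [← mul_assoc, IsUnit.val_inv_mul, one_mul]
  rw [this]
  exact Ideal.mul_mem_left _ _ hmem

lemma gm_W_mem : gm - X 2 ^ 3 * (1 - X 2) ^ 5 ∈ Ideal.span {X 0 - X 2 ^ 2, X 1 - X 2 ^ 3} := by
  set I : Ideal (MvPolynomial (Fin 3) ℂ) := Ideal.span {X 0 - X 2 ^ 2, X 1 - X 2 ^ 3} with hI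
  have hv : ∀ i, X i - (![X 2 ^ 2, X 2 ^ 3, X 2] : Fin 3 → MvPolynomial (Fin 3) ℂ) i ∈ I := by
    intro i
    fin_cases i
    · exact Ideal.subset_span (by simp)
    · exact Ideal.subset_span (by simp)
    · show X 2 - X 2 ∈ I
      simp
  have hsub := sub_aeval_mem I _ hv gm
  have hval : (aeval (![X 2 ^ 2, X 2 ^ 3, X 2] : Fin 3 → MvPolynomial (Fin 3) ℂ)) gm
      = X 2 ^ 3 * (1 - X 2) ^ 5 := by
    rw [gm, tm]
    simp only [map_add, map_sub, map_mul, map_pow, aeval_X]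
    rw [show (![X 2 ^ 2, X 2 ^ 3, X 2] : Fin 3 → MvPolynomial (Fin 3) ℂ) 0 = X 2 ^ 2 from rfl,
      show (![X 2 ^ 2, X 2 ^ 3, X 2] : Fin 3 → MvPolynomial (Fin 3) ℂ) 1 = X 2 ^ 3 from rfl,
      show (![X 2 ^ 2, X 2 ^ 3, X 2] : Fin 3 → MvPolynomial (Fin 3) ℂ) 2 = X 2 from rfl]
    ring
  rwa [hval] at hsub

lemma W_mem_sup [PE.IsPrime] : qA (X 2 ^ 3 * (1 - X 2) ^ 5) ∈ IF ⊔ symb5 := by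
  have h1 : qA gm ∈ IF ⊔ symb5 := Ideal.mem_sup_right g_symb5
  have h2 : qA (gm - X 2 ^ 3 * (1 - X 2) ^ 5) ∈ IF := by
    have := Ideal.mem_map_of_mem qA gm_W_mem
    rwa [Ideal.map_span, Set.image_insert_eq, Set.image_singleton, ← IF] at this
  have h2' : qA (gm - X 2 ^ 3 * (1 - X 2) ^ 5) ∈ IF ⊔ symb5 := Ideal.mem_sup_left h2
  have := Ideal.sub_mem _ h1 h2'
  rwa [← map_sub, sub_sub_cancel] at this

/-- constant coefficient homomorphism on the quotient -/
noncomputable def cA : A₄ring →+* ℂ :=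
  Ideal.Quotient.lift relA constantCoeff (by
    intro a ha
    rw [relA, Ideal.mem_span_singleton] at ha
    obtain ⟨c, rfl⟩ := ha
    rw [map_mul]
    have : constantCoeff (X 0 * X 1 - X 2 ^ 5 : MvPolynomial (Fin 3) ℂ) = 0 := by simp
    rw [this, zero_mul])

lemma cA_qA (p : MvPolynomial (Fin 3) ℂ) : cA (qA p) = constantCoeff p := rfl

lemma Morig_ker_cA : Morig ≤ RingHom.ker cA := by
  rw [Morig]
  apply Ideal.span_le.2
  rintro u hu
  simp only [Set.mem_insert_iff, Set.mem_singleton_iff] at hu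
  rcases hu with rfl | rfl | rfl <;>
    · refine SetLike.mem_coe.mpr (RingHom.mem_ker.mpr ?_)
      rw [cA_qA]
      simp

lemma notin_Morig_const {q : MvPolynomial (Fin 3) ℂ} (h : qA q ∉ Morig) : constantCoeff q ≠ 0 := by
  intro h0
  apply h
  have hq : q ∈ Ideal.span {X 0, X 1, X 2} := by
    have hv : ∀ i, X i - (fun _ => (0 : MvPolynomial (Fin 3) ℂ)) i ∈
        Ideal.span {(X 0 : MvPolynomial (Fin 3) ℂ), X 1, X 2} := by
      intro i
      rw [sub_zero]
      fin_cases i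
      · exact Ideal.subset_span (by simp)
      · exact Ideal.subset_span (by simp)
      · exact Ideal.subset_span (by simp)
    have hsub := sub_aeval_mem _ _ hv q
    rw [show (fun _ => (0 : MvPolynomial (Fin 3) ℂ)) = (0 : Fin 3 → MvPolynomial (Fin 3) ℂ) from rfl,
      aeval_zero, h0, map_zero, sub_zero] at hsub
    exact hsub
  have := Ideal.mem_map_of_mem qA hq
  rwa [Ideal.map_span, Set.image_insert_eq, Set.image_insert_eq, Set.image_singleton, ← Morig] at this

lemma nilpotent_span_r0 {w : R0} (hw : w ∈ Ideal.span {r0}) : IsNilpotent w := by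
  obtain ⟨d, rfl⟩ := Ideal.mem_span_singleton.1 hw
  exact ⟨3, by rw [mul_pow, r0_3, zero_mul]⟩

lemma χA_isUnit {s : A₄ring} (hs : s ∉ Morig) : IsUnit (χA s) := by
  obtain ⟨q, rfl⟩ := Ideal.Quotient.mk_surjective s
  have hq : qA q ∉ Morig := hs
  have hc : constantCoeff q ≠ 0 := notin_Morig_const hq
  have hsplit : χm q = χm (q - C (constantCoeff q)) + algebraMap ℂ R0 (constantCoeff q) := by
    rw [← algHom_C χm (constantCoeff q)]
    rw [← map_add, sub_add_cancel]
  have hmem : q - C (constantCoeff q) ∈ Ideal.span {(X 0 : MvPolynomial (Fin 3) ℂ), X 1, X 2} := by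
    have hv : ∀ i, X i - (fun _ => (0 : MvPolynomial (Fin 3) ℂ)) i ∈
        Ideal.span {(X 0 : MvPolynomial (Fin 3) ℂ), X 1, X 2} := by
      intro i
      rw [sub_zero]
      fin_cases i
      · exact Ideal.subset_span (by simp)
      · exact Ideal.subset_span (by simp)
      · exact Ideal.subset_span (by simp)
    have hsub := sub_aeval_mem _ _ hv q
    rwa [show (fun _ => (0 : MvPolynomial (Fin 3) ℂ)) = (0 : Fin 3 → MvPolynomial (Fin 3) ℂ) from rfl,
      aeval_zero, show (algebraMap ℂ (MvPolynomial (Fin 3) ℂ)) (constantCoeff q) = C (constantCoeff q) from rfl] at hsub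
  have hnil : IsNilpotent (χm (q - C (constantCoeff q))) := by
    apply nilpotent_span_r0
    have hle : Ideal.map (χm : MvPolynomial (Fin 3) ℂ →ₐ[ℂ] R0)
        (Ideal.span {(X 0 : MvPolynomial (Fin 3) ℂ), X 1, X 2}) ≤ Ideal.span {r0} := by
      rw [Ideal.map_span, Set.image_insert_eq, Set.image_insert_eq, Set.image_singleton]
      apply Ideal.span_le.2
      rintro u hu
      simp only [Set.mem_insert_iff, Set.mem_singleton_iff] at hu
      rcases hu with rfl | rfl | rfl
      · rw [show χm (X 0) = r0 ^ 2 from by simp [χm]]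
        exact Ideal.mem_span_singleton.2 ⟨r0, (pow_two r0)⟩
      · rw [show χm (X 1) = 0 from by simp [χm]]
        exact Ideal.zero_mem _
      · rw [show χm (X 2) = r0 from by simp [χm]]
        exact Ideal.subset_span rfl
    exact hle (Ideal.mem_map_of_mem _ hmem)
  have hu : IsUnit (algebraMap ℂ R0 (constantCoeff q)) := (isUnit_iff_ne_zero.2 hc).map _
  have := hnil.isUnit_add_right_of_commute hu (Commute.all _ _)
  rw [← hsplit] at this
  exact this


noncomputable instance instCommRingSorig [Morig.IsPrime] : CommRing Sorig := inferInstance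

set_option linter.unusedSectionVars false
section main
variable [PE.IsPrime] [Morig.IsPrime]

noncomputable def J2 : Ideal Sorig := Ideal.map (algebraMap A₄ring Sorig) (IF ⊔ symb5)

noncomputable def πq : A₄ring →+* Sorig ⧸ J2 :=
  (Ideal.Quotient.mk J2).comp (algebraMap A₄ring Sorig)

lemma πq_zero {a : A₄ring} (ha : a ∈ IF ⊔ symb5) : πq a = 0 := by
  rw [πq, RingHom.comp_apply, Ideal.Quotient.eq_zero_iff_mem]
  exact Ideal.mem_map_of_mem _ ha

lemma πq_unit {a : A₄ring} (ha : a ∉ Morig) : IsUnit (πq a) := by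
  have : IsUnit (algebraMap A₄ring Sorig a) :=
    IsLocalization.map_units Sorig (⟨a, ha⟩ : Morig.primeCompl)
  exact this.map (Ideal.Quotient.mk J2)

lemma one_sub_z_notin : qA ((1 : MvPolynomial (Fin 3) ℂ) - X 2) ∉ Morig := by
  intro h
  have := Morig_ker_cA h
  rw [RingHom.mem_ker, cA_qA] at this
  simp at this

lemma πq_z3 : πq (qA (X 2)) ^ 3 = 0 := by
  have hW := πq_zero W_mem_sup
  have hu : IsUnit (πq (qA ((1 : MvPolynomial (Fin 3) ℂ) - X 2))) := πq_unit one_sub_z_notin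
  have hexp : πq (qA (X 2)) ^ 3 * πq (qA ((1 : MvPolynomial (Fin 3) ℂ) - X 2)) ^ 5 = 0 := by
    have : πq (qA (X 2)) ^ 3 * πq (qA ((1 : MvPolynomial (Fin 3) ℂ) - X 2)) ^ 5
        = πq (qA (X 2 ^ 3 * (1 - X 2) ^ 5)) := by
      rw [map_mul, map_mul, map_pow, map_pow, map_pow, map_pow]
    rw [this]
    exact hW
  have := (hu.pow 5).mul_left_eq_zero.1 hexp
  exact this

lemma IF_ker_χA : ∀ a ∈ IF, χA a = 0 := by
  intro a ha
  have hle : IF ≤ RingHom.ker χA := by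
    rw [IF]
    apply Ideal.span_le.2
    rintro u hu
    simp only [Set.mem_insert_iff, Set.mem_singleton_iff] at hu
    rcases hu with rfl | rfl
    · refine SetLike.mem_coe.mpr (RingHom.mem_ker.mpr ?_)
      rw [show χA (qA (X 0 - X 2 ^ 2)) = χm (X 0 - X 2 ^ 2) from rfl]
      rw [map_sub, map_pow, show χm (X 0) = r0 ^ 2 from by simp [χm],
        show χm (X 2) = r0 from by simp [χm], sub_self]
    · refine SetLike.mem_coe.mpr (RingHom.mem_ker.mpr ?_)
      rw [show χA (qA (X 1 - X 2 ^ 3)) = χm (X 1 - X 2 ^ 3) from rfl]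
      rw [map_sub, map_pow, show χm (X 1) = 0 from by simp [χm],
        show χm (X 2) = r0 from by simp [χm], r0_3, sub_self]
  exact hle ha

noncomputable def χS : Sorig →+* R0 :=
  IsLocalization.lift (M := Morig.primeCompl) (S := Sorig) (g := χA) (fun y => χA_isUnit y.2)

lemma χS_algebraMap (a : A₄ring) : χS (algebraMap A₄ring Sorig a) = χA a :=
  IsLocalization.lift_eq _ a

noncomputable def χ' : (Sorig ⧸ J2) →+* R0 :=
  Ideal.Quotient.lift J2 χS (by
    intro a ha
    have hle : J2 ≤ RingHom.ker χS := by
      rw [J2]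
      apply Ideal.map_le_iff_le_comap.2
      apply sup_le
      · intro u hu
        rw [Ideal.mem_comap, RingHom.mem_ker, χS_algebraMap]
        exact IF_ker_χA u hu
      · intro u hu
        rw [Ideal.mem_comap, RingHom.mem_ker, χS_algebraMap]
        exact χA_symb5 hu
    exact RingHom.mem_ker.1 (hle ha))

lemma χ'_πq (a : A₄ring) : χ' (πq a) = χA a := by
  rw [πq, RingHom.comp_apply, χ', Ideal.Quotient.lift_mk, χS_algebraMap]

noncomputable def ρq : R0 →+* Sorig ⧸ J2 :=
  AdjoinRoot.lift (πq.comp (qA.comp (C : ℂ →+* MvPolynomial (Fin 3) ℂ))) (πq (qA (X 2))) (by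
    simp only [Polynomial.eval₂_pow, Polynomial.eval₂_X]
    exact πq_z3)

lemma ρq_r0 : ρq r0 = πq (qA (X 2)) := AdjoinRoot.lift_root _

lemma ρq_C (c : ℂ) : ρq (algebraMap ℂ R0 c) = πq (qA (C c)) := by
  rw [AdjoinRoot.algebraMap_eq, ρq, AdjoinRoot.lift_of]
  rfl

end main

section main2
variable [PE.IsPrime] [Morig.IsPrime]

lemma ρq_χA (a : A₄ring) : ρq (χA a) = πq a := by
  have key : (ρq.comp χA).comp qA = πq.comp qA := by
    apply MvPolynomial.ringHom_ext
    · intro c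
      show ρq (χA (qA (C c))) = πq (qA (C c))
      rw [show χA (qA (C c)) = χm (C c) from rfl, show χm (C c) = algebraMap ℂ R0 c from by
        rw [← algHom_C χm c]]
      exact ρq_C c
    · intro i
      fin_cases i
      · show ρq (χA (qA (X 0))) = πq (qA (X 0))
        rw [show χA (qA (X 0)) = χm (X 0) from rfl, show χm (X 0) = r0 ^ 2 from by simp [χm],
          map_pow, ρq_r0]
        have h : qA (X 0 - X 2 ^ 2) ∈ IF ⊔ symb5 :=
          Ideal.mem_sup_left (Ideal.subset_span (Set.mem_insert _ _))
        have h0 := πq_zero h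
        rw [map_sub, map_pow] at h0
        rw [map_sub, map_pow] at h0 <;> try skip
        have := sub_eq_zero.1 h0
        rw [← this]
      · show ρq (χA (qA (X 1))) = πq (qA (X 1))
        rw [show χA (qA (X 1)) = χm (X 1) from rfl, show χm (X 1) = 0 from by simp [χm], map_zero]
        have h : qA (X 1 - X 2 ^ 3) ∈ IF ⊔ symb5 :=
          Ideal.mem_sup_left (Ideal.subset_span (by simp))
        have h0 := πq_zero h
        rw [map_sub, map_pow, map_sub, map_pow] at h0 <;> try skip
        have := sub_eq_zero.1 h0
        rw [this, πq_z3]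
      · show ρq (χA (qA (X 2))) = πq (qA (X 2))
        rw [show χA (qA (X 2)) = χm (X 2) from rfl, show χm (X 2) = r0 from by simp [χm], ρq_r0]
  obtain ⟨q, rfl⟩ := Ideal.Quotient.mk_surjective a
  exact DFunLike.congr_fun key q

lemma χ'_ρq (v : R0) : χ' (ρq v) = v := by
  have key : (χ'.comp ρq).comp (AdjoinRoot.mk _) = AdjoinRoot.mk _ := by
    apply Polynomial.ringHom_ext
    · intro a
      show χ' (ρq (AdjoinRoot.mk _ (Polynomial.C a))) = AdjoinRoot.mk _ (Polynomial.C a)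
      rw [show (AdjoinRoot.mk ((Polynomial.X : Polynomial ℂ) ^ 3)) (Polynomial.C a)
          = algebraMap ℂ R0 a from rfl]
      rw [ρq_C, χ'_πq, show χA (qA (C a)) = χm (C a) from rfl, ← algHom_C χm a]
    · show χ' (ρq (AdjoinRoot.mk _ Polynomial.X)) = AdjoinRoot.mk _ Polynomial.X
      rw [AdjoinRoot.mk_X, show AdjoinRoot.root ((Polynomial.X : Polynomial ℂ) ^ 3) = r0 from rfl,
        ρq_r0, χ'_πq, show χA (qA (X 2)) = χm (X 2) from rfl, show χm (X 2) = r0 from by simp [χm]]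
  obtain ⟨q, rfl⟩ := AdjoinRoot.mk_surjective v
  exact DFunLike.congr_fun key q

lemma ρq_surjective : Function.Surjective ρq := by
  intro w
  obtain ⟨u, rfl⟩ := Ideal.Quotient.mk_surjective w
  obtain ⟨⟨a, s⟩, hmk⟩ := IsLocalization.mk'_surjective Morig.primeCompl u
  have hspec : u * algebraMap A₄ring Sorig (s : A₄ring) = algebraMap A₄ring Sorig a := by
    rw [← hmk]; exact IsLocalization.mk'_spec Sorig a s
  have hq : Ideal.Quotient.mk J2 u * πq (s : A₄ring) = πq a := by
    rw [πq, RingHom.comp_apply, RingHom.comp_apply, ← map_mul]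
    exact congrArg _ hspec
  have hu : IsUnit (χA (s : A₄ring)) := χA_isUnit s.2
  set U := hu.unit
  have hπs : ρq (U : R0) = πq (s : A₄ring) := by rw [IsUnit.unit_spec, ρq_χA]
  refine ⟨χA a * (↑U⁻¹ : R0), ?_⟩
  rw [map_mul, ρq_χA]
  have hinv : ρq (↑U⁻¹ : R0) * πq (s : A₄ring) = 1 := by
    rw [← hπs, ← map_mul, Units.inv_mul, map_one]
  calc πq a * ρq (↑U⁻¹ : R0) = (Ideal.Quotient.mk J2 u * πq (s : A₄ring)) * ρq (↑U⁻¹ : R0) := by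
        rw [hq]
    _ = Ideal.Quotient.mk J2 u * (ρq (↑U⁻¹ : R0) * πq (s : A₄ring)) := by ring
    _ = Ideal.Quotient.mk J2 u := by rw [hinv, mul_one]

end main2

section final
variable [PE.IsPrime] [Morig.IsPrime]

lemma algebraMap_Rq (c : ℂ) : algebraMap ℂ (Sorig ⧸ J2) c = πq (qA (C c)) := rfl

noncomputable def ρalg : R0 →ₐ[ℂ] Sorig ⧸ J2 :=
  { ρq with
    commutes' := fun c => by
      show ρq (algebraMap ℂ R0 c) = algebraMap ℂ (Sorig ⧸ J2) c
      rw [ρq_C, algebraMap_Rq] }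

lemma finrank_R0 : Module.finrank ℂ R0 = 3 := by
  have hne : ((Polynomial.X : Polynomial ℂ) ^ 3) ≠ 0 := pow_ne_zero _ Polynomial.X_ne_zero
  rw [(AdjoinRoot.powerBasis hne).finrank, AdjoinRoot.powerBasis_dim,
    Polynomial.natDegree_X_pow]

lemma smul_Sorig (c : ℂ) (u : Sorig) : c • u = algebraMap ℂ Sorig c * u := by
  induction u using Localization.induction_on with
  | H p =>
    obtain ⟨a, s⟩ := p
    rw [Localization.smul_mk]
    have ha : (c • a : A₄ring) = algebraMap ℂ A₄ring c * a := Algebra.smul_def c a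
    rw [ha, show algebraMap ℂ Sorig c = algebraMap A₄ring Sorig (algebraMap ℂ A₄ring c) from rfl,
      ← Localization.mk_one_eq_algebraMap, Localization.mk_mul, one_mul]

lemma smul_Rq (c : ℂ) (w : Sorig ⧸ J2) : c • w = algebraMap ℂ (Sorig ⧸ J2) c * w := by
  obtain ⟨u, rfl⟩ := Submodule.Quotient.mk_surjective J2 w
  rw [← Submodule.Quotient.mk_smul J2 c u]
  rw [smul_Sorig]
  rfl

noncomputable def eLin (hbij : Function.Bijective ρq) : R0 ≃ₗ[ℂ] Sorig ⧸ J2 :=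
  { Equiv.ofBijective ρq hbij with
    map_add' := map_add ρq
    map_smul' := fun c v => by
      show ρq (c • v) = c • ρq v
      rw [Algebra.smul_def, map_mul, ρq_C, smul_Rq, algebraMap_Rq] }


end final

attribute [-instance] instCommRingA₄ring instCommRingSorig

theorem stmt_6 [PE.IsPrime] [Morig.IsPrime] :
    Module.finrank ℂ
      (@HasQuotient.Quotient Sorig (Ideal Sorig) (Ideal.instHasQuotient (R := Sorig))
        (Ideal.map (algebraMap A₄ring Sorig) (IF ⊔ symb5))) = 3 := by
  show Module.finrank ℂ (@HasQuotient.Quotient Sorig (Ideal Sorig) (Ideal.instHasQuotient (R := Sorig)) J2) = 3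
  have hbij : Function.Bijective ρq := by
    constructor
    · exact Function.LeftInverse.injective (g := χ') (fun v => χ'_ρq v)
    · exact ρq_surjective
  exact ((eLin hbij).finrank_eq).symm.trans finrank_R0
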